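/- Consider the CS-BATS construction: given a base graph with m rows g_0, ..., g_{m-1} ∈ {0,1}^K, the i-th check node row is t_i = g_{i mod m} cyclically right-shifted by ⌊i/m⌋ positions. Fix a variable node index k ∈ {0,...,K-1}. Then as the number of check nodes N → ∞, the fraction of check nodes t_0, ..., t_{N-1} whose k-th entry is 1 converges to (∑_{j=0}^{m-1} deg(g_j)) / (mK), independent of k. -/

import Mathlib

open Filter

/-- Hamming weight (degree) of a binary row over `ZMod K`. -/
def rowDeg {K : ℕ} [NeZero K] (v : ZMod K → Bool) : ℕ :=
  (Finset.univ.filter (fun x => v x = true)).card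

/-- The `i`-th check-node row of the CS-BATS code: row `i mod m` of the base
graph cyclically right-shifted by `⌊i / m⌋`. -/
def csRow {m K : ℕ} (hm : 0 < m) (g : Fin m → ZMod K → Bool) (i : ℕ) :
    ZMod K → Bool :=
  fun k => g ⟨i % m, Nat.mod_lt i hm⟩ (k - ((i / m : ℕ) : ZMod K))

section Aux

set_option linter.unusedSectionVars false

variable {m K : ℕ} (hm : 0 < m) [NeZero K] (g : Fin m → ZMod K → Bool) (k : ZMod K)

lemma csRow_period (i : ℕ) : csRow hm g (i + m * K) = csRow hm g i := by
  funext x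
  have h1 : (i + m * K) % m = i % m := Nat.add_mul_mod_self_left i m K
  have h2 : (((i + m * K) / m : ℕ) : ZMod K) = ((i / m : ℕ) : ZMod K) := by
    rw [Nat.add_mul_div_left _ _ hm]
    push_cast
    simp
  simp [csRow, h1, h2]

/-- indicator of the `k`-th entry of row `i` -/
noncomputable def csInd (i : ℕ) : ℕ := if csRow hm g i k = true then 1 else 0

lemma csInd_period (i : ℕ) : csInd hm g k (i + m * K) = csInd hm g k i := by
  simp [csInd, csRow_period hm g i]

lemma sum_one_period :
    ∑ i ∈ Finset.range (m * K), csInd hm g k i = ∑ j, rowDeg (g j) := by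
  -- reindex `range (m*K)` by `Fin m × Fin K` via `i = a + m * b`
  have key : ∑ i ∈ Finset.range (m * K), csInd hm g k i
      = ∑ p ∈ (Finset.range m ×ˢ Finset.range K), csInd hm g k (p.1 + m * p.2) := by
    refine Finset.sum_nbij' (fun i => (i % m, i / m)) (fun p => p.1 + m * p.2) ?_ ?_ ?_ ?_ ?_
    · intro i hi
      simp only [Finset.mem_range] at hi
      simp only [Finset.mem_product, Finset.mem_range]
      exact ⟨Nat.mod_lt _ hm, (Nat.div_lt_iff_lt_mul hm).mpr (by rwa [Nat.mul_comm K m])⟩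
    · intro p hp
      simp only [Finset.mem_product, Finset.mem_range] at hp
      simp only [Finset.mem_range]
      calc p.1 + m * p.2 < m * (p.2 + 1) := by rw [Nat.mul_succ]; omega
        _ ≤ m * K := Nat.mul_le_mul_left m hp.2
    · intro i hi
      exact (Nat.mod_add_div i m)
    · intro p hp
      simp only [Finset.mem_product, Finset.mem_range] at hp
      ext
      · simp [Nat.add_mul_mod_self_left, Nat.mod_eq_of_lt hp.1]
      · simp [Nat.add_mul_div_left _ _ hm, Nat.div_eq_of_lt hp.1]
    · intro i hi
      rw [Nat.mod_add_div i m]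
  rw [key, Finset.sum_product]
  rw [← Fin.sum_univ_eq_sum_range (fun a => ∑ b ∈ Finset.range K,
      csInd hm g k (a + m * b))]
  refine Finset.sum_congr rfl fun a _ => ?_
  have hrow : ∀ b, csInd hm g k ((a : ℕ) + m * b)
      = if g a (k - (b : ZMod K)) = true then 1 else 0 := by
    intro b
    have h1 : ((a : ℕ) + m * b) % m = (a : ℕ) := by
      simp [Nat.add_mul_mod_self_left, Nat.mod_eq_of_lt a.isLt]
    have h2 : ((a : ℕ) + m * b) / m = b := by
      simp [Nat.add_mul_div_left _ _ hm, Nat.div_eq_of_lt a.isLt]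
    simp [csInd, csRow, h1, h2]
  simp only [hrow]
  -- now reindex `range K` by `ZMod K`
  have hK : ∑ b ∈ Finset.range K, (if g a (k - (b : ZMod K)) = true then 1 else 0)
      = ∑ x : ZMod K, (if g a (k - x) = true then 1 else 0) := by
    refine Finset.sum_nbij' (i := fun b : ℕ => ((b : ZMod K)))
      (j := fun x : ZMod K => x.val) ?_ ?_ ?_ ?_ ?_
    · intro b _; exact Finset.mem_univ _
    · intro x _
      simpa [Finset.mem_range] using ZMod.val_lt x
    · intro b hb
      simp only [Finset.mem_range] at hb
      exact ZMod.val_cast_of_lt hb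
    · intro x _
      simp [ZMod.natCast_val, ZMod.cast_id]
    · intro b _; rfl
  rw [hK, rowDeg, Finset.card_filter]
  exact Fintype.sum_equiv (Equiv.subLeft k) _ _ (fun x => by simp)

lemma sum_Ico_period (n : ℕ) :
    ∑ i ∈ Finset.Ico n (n + m * K), csInd hm g k i
      = ∑ j, rowDeg (g j) := by
  induction n with
  | zero =>
    rw [Nat.zero_add, ← Finset.range_eq_Ico]
    exact sum_one_period hm g k
  | succ n ih =>
    have h1 : ∑ i ∈ Finset.Ico n (n + m * K + 1), csInd hm g k i
        = ∑ i ∈ Finset.Ico n (n + m * K), csInd hm g k i + csInd hm g k (n + m * K) :=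
      Finset.sum_Ico_succ_top (by omega) _
    have h2 : ∑ i ∈ Finset.Ico n (n + m * K + 1), csInd hm g k i
        = csInd hm g k n + ∑ i ∈ Finset.Ico (n + 1) (n + m * K + 1), csInd hm g k i :=
      Finset.sum_eq_sum_Ico_succ_bot (by omega) _
    have h3 : csInd hm g k (n + m * K) = csInd hm g k n := csInd_period hm g k n
    have : n + 1 + m * K = n + m * K + 1 := by omega
    rw [this, ih] at *
    omega

lemma sum_range_split (q r : ℕ) :
    ∑ i ∈ Finset.range (q * (m * K) + r), csInd hm g k i
      = q * (∑ j, rowDeg (g j)) + ∑ i ∈ Finset.range r, csInd hm g k i := by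
  induction q with
  | zero => simp
  | succ q ih =>
    have hsplit : (q + 1) * (m * K) + r = (q * (m * K) + r) + m * K := by ring
    rw [hsplit, Finset.range_eq_Ico,
      ← Finset.sum_Ico_consecutive _ (Nat.zero_le _) (Nat.le_add_right _ _),
      ← Finset.range_eq_Ico, ih, sum_Ico_period hm g k]
    ring

end Aux

theorem stmt13 (m K : ℕ) (hm : 0 < m) [NeZero K] (g : Fin m → ZMod K → Bool)
    (k : ZMod K) :
    Tendsto
      (fun N : ℕ =>
        (((Finset.range N).filter (fun i => csRow hm g i k = true)).card : ℝ) / N)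
      atTop
      (nhds ((∑ j, (rowDeg (g j) : ℝ)) / (m * K))) := by
  have hK : 0 < K := Nat.pos_of_ne_zero (NeZero.ne K)
  set p : ℕ := m * K with hp
  have hp0 : 0 < p := Nat.mul_pos hm hK
  set C : ℕ := ∑ j, rowDeg (g j) with hC
  have hCp : C ≤ p := by
    rw [hC, hp]
    calc ∑ j, rowDeg (g j) ≤ ∑ _j : Fin m, K := by
          refine Finset.sum_le_sum fun j _ => ?_
          simpa [rowDeg] using (Finset.card_filter_le Finset.univ _).trans_eq
            (by simp [ZMod.card])
      _ = m * K := by simp [Finset.sum_const, mul_comm]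
  -- the counting function
  have hcard : ∀ N, ((Finset.range N).filter (fun i => csRow hm g i k = true)).card
      = ∑ i ∈ Finset.range N, csInd hm g k i := by
    intro N
    rw [Finset.card_filter]
    rfl
  have hsum : ∀ N : ℕ, ∑ i ∈ Finset.range N, csInd hm g k i
      = (N / p) * C + ∑ i ∈ Finset.range (N % p), csInd hm g k i := by
    intro N
    conv_lhs => rw [← Nat.div_add_mod N p, Nat.mul_comm p (N / p)]
    exact sum_range_split hm g k (N / p) (N % p)
  -- bound the difference
  have hbound : ∀ N : ℕ, |((Finset.range N).filter
      (fun i => csRow hm g i k = true)).card - (N : ℝ) * (C / p)| ≤ 2 * p := by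
    intro N
    have hr : N % p < p := Nat.mod_lt N hp0
    have hNsplit : (N : ℝ) = ((N / p : ℕ) : ℝ) * p + ((N % p : ℕ) : ℝ) := by
      conv_lhs => rw [← Nat.div_add_mod N p]
      push_cast
      ring
    have hpR : (p : ℝ) ≠ 0 := Nat.cast_ne_zero.mpr hp0.ne'
    have hS : (((Finset.range N).filter (fun i => csRow hm g i k = true)).card : ℝ)
        = ((N / p : ℕ) : ℝ) * C + ((∑ i ∈ Finset.range (N % p), csInd hm g k i : ℕ) : ℝ) := by
      rw [hcard, hsum]
      push_cast
      ring
    rw [hS, hNsplit]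
    have hexp : ((N / p : ℕ) : ℝ) * C + ((∑ i ∈ Finset.range (N % p), csInd hm g k i : ℕ) : ℝ)
        - (((N / p : ℕ) : ℝ) * p + ((N % p : ℕ) : ℝ)) * (C / p)
        = ((∑ i ∈ Finset.range (N % p), csInd hm g k i : ℕ) : ℝ)
          - ((N % p : ℕ) : ℝ) * (C / p) := by
      field_simp
      ring
    rw [hexp]
    have h1 : ((∑ i ∈ Finset.range (N % p), csInd hm g k i : ℕ) : ℝ) ≤ p := by
      have : ∑ i ∈ Finset.range (N % p), csInd hm g k i ≤ N % p := by
        calc ∑ i ∈ Finset.range (N % p), csInd hm g k i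
            ≤ ∑ _i ∈ Finset.range (N % p), 1 := by
              refine Finset.sum_le_sum fun i _ => ?_
              simp only [csInd]
              split <;> omega
          _ = N % p := by simp
      calc ((∑ i ∈ Finset.range (N % p), csInd hm g k i : ℕ) : ℝ)
          ≤ ((N % p : ℕ) : ℝ) := Nat.cast_le.mpr this
        _ ≤ (p : ℝ) := Nat.cast_le.mpr hr.le
    have h2 : ((N % p : ℕ) : ℝ) * (C / p) ≤ p := by
      have hc1 : (C : ℝ) / p ≤ 1 := by
        rw [div_le_one (by positivity)]
        exact_mod_cast hCp
      calc ((N % p : ℕ) : ℝ) * (C / p) ≤ ((N % p : ℕ) : ℝ) * 1 := by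
            refine mul_le_mul_of_nonneg_left hc1 (by positivity)
        _ ≤ p := by simpa using (Nat.cast_le.mpr hr.le : ((N % p : ℕ) : ℝ) ≤ p)
    rw [abs_sub_le_iff]
    constructor
    · have : (0:ℝ) ≤ ((N % p : ℕ) : ℝ) * (C / p) := by positivity
      nlinarith
    · have : (0:ℝ) ≤ ((∑ i ∈ Finset.range (N % p), csInd hm g k i : ℕ) : ℝ) := by positivity
      nlinarith
  -- conclude
  have hlim : Tendsto (fun N : ℕ =>
      (((Finset.range N).filter (fun i => csRow hm g i k = true)).card : ℝ) / N
        - (C : ℝ) / p) atTop (nhds 0) := by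
    apply squeeze_zero_norm' (a := fun N : ℕ => 2 * (p : ℝ) / N)
    · filter_upwards [eventually_ge_atTop 1] with N hN
      have hN0 : (0:ℝ) < N := by exact_mod_cast hN
      have : (((Finset.range N).filter (fun i => csRow hm g i k = true)).card : ℝ) / N
          - (C : ℝ) / p
          = ((((Finset.range N).filter (fun i => csRow hm g i k = true)).card : ℝ)
              - (N : ℝ) * ((C : ℝ) / p)) / N := by
        field_simp
      rw [Real.norm_eq_abs, this, abs_div, abs_of_pos hN0, div_le_div_iff_of_pos_right hN0]
      exact hbound N
    · simpa using tendsto_const_div_atTop_nhds_zero_nat (2 * (p : ℝ))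
  have := tendsto_sub_nhds_zero_iff.mp hlim
  have hgoal : ((∑ j, (rowDeg (g j) : ℝ)) / (m * K)) = (C : ℝ) / p := by
    rw [hC, hp]
    push_cast
    ring
  rw [hgoal]
  exact this
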